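/- Let G = (V,E) be a graph with maximum degree Δ and suppose every set S of vertices with |S| ≤ K satisfies |N(S)| ≥ (1−β)Δ|S|, where β < 1/2. Let S, S' be disjoint vertex sets with |S| = |S'| ≤ K/2. Then there exists a vertex v ∈ S' such that |N(v) ∩ N(S)| ≤ 2βΔ. -/
import Mathlib


/-- The neighborhood `N(S)` of a set of vertices. -/
def nbhd {V : Type*} [Fintype V] [DecidableEq V] (G : SimpleGraph V)
    [DecidableRel G.Adj] (S : Finset V) : Finset V :=
  S.biUnion fun s => G.neighborFinset s

/-- Under the expansion hypothesis `|N(S)| ≥ (1−β)Δ|S|` for sets of size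
at most `K` (with `0 ≤ β < 1/2`), for disjoint nonempty `S, S'` with `|S| = |S'| ≤ K/2`
there is a vertex `v ∈ S'` with `|N(v) ∩ N(S)| ≤ 2βΔ`. -/
theorem stmt12 {V : Type*} [Fintype V] [DecidableEq V] (G : SimpleGraph V)
    [DecidableRel G.Adj] (Δ K : ℕ) (hK : 0 < K) (hΔ : ∀ v, G.degree v ≤ Δ)
    (β : ℝ) (hβ0 : 0 ≤ β) (hβ : β < 1 / 2)
    (hexp : ∀ S : Finset V, S.card ≤ K →
      (1 - β) * Δ * S.card ≤ ((nbhd G S).card : ℝ))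
    (S S' : Finset V) (hdisj : Disjoint S S') (hne : S'.Nonempty)
    (hcard : S.card = S'.card) (hhalf : (S.card : ℝ) ≤ (K : ℝ) / 2) :
    ∃ v ∈ S', ((G.neighborFinset v ∩ nbhd G S).card : ℝ) ≤ 2 * β * Δ := by
  by_contra hcon
  push_neg at hcon
  set T := S ∪ S' with hT
  have hTcard : T.card = 2 * S.card := by
    rw [hT, Finset.card_union_of_disjoint hdisj, hcard]; ring
  have hTK : T.card ≤ K := by
    have : (T.card : ℝ) ≤ K := by rw [hTcard]; push_cast; linarith
    exact_mod_cast this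
  have h1 := hexp T hTK
  -- N(T) = N(S) ∪ N(S')
  have hNT : nbhd G T = nbhd G S ∪ nbhd G S' := by
    ext x
    simp only [nbhd, Finset.mem_biUnion, Finset.mem_union, hT]
    constructor
    · rintro ⟨v, hv | hv, hx⟩
      · exact Or.inl ⟨v, hv, hx⟩
      · exact Or.inr ⟨v, hv, hx⟩
    · rintro (⟨v, hv, hx⟩ | ⟨v, hv, hx⟩)
      · exact ⟨v, Or.inl hv, hx⟩
      · exact ⟨v, Or.inr hv, hx⟩
  -- |N(T)| ≤ |N(S)| + |N(S') \ N(S)|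
  have h2 : (nbhd G T).card ≤ (nbhd G S).card + (nbhd G S' \ nbhd G S).card := by
    rw [hNT, ← Finset.union_sdiff_self_eq_union]
    exact Finset.card_union_le _ _
  -- |N(S)| ≤ Δ * |S|
  have h3 : (nbhd G S).card ≤ Δ * S.card := by
    calc (nbhd G S).card ≤ ∑ v ∈ S, (G.neighborFinset v).card := Finset.card_biUnion_le
    _ ≤ ∑ v ∈ S, Δ := Finset.sum_le_sum fun v _ => by
        rw [G.card_neighborFinset_eq_degree]; exact hΔ v
    _ = Δ * S.card := by rw [Finset.sum_const, smul_eq_mul, mul_comm]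
  -- N(S') \ N(S) ⊆ ⋃_{v ∈ S'} (N(v) \ N(S))
  have h4 : (nbhd G S' \ nbhd G S).card ≤
      ∑ v ∈ S', (G.neighborFinset v \ nbhd G S).card := by
    calc (nbhd G S' \ nbhd G S).card
        ≤ (S'.biUnion fun v => G.neighborFinset v \ nbhd G S).card := by
          apply Finset.card_le_card
          intro x hx
          rw [Finset.mem_sdiff] at hx
          obtain ⟨hx1, hx2⟩ := hx
          rw [nbhd, Finset.mem_biUnion] at hx1
          obtain ⟨v, hv, hxv⟩ := hx1
          exact Finset.mem_biUnion.2 ⟨v, hv, Finset.mem_sdiff.2 ⟨hxv, hx2⟩⟩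
      _ ≤ ∑ v ∈ S', (G.neighborFinset v \ nbhd G S).card := Finset.card_biUnion_le
  -- each term is < Δ - 2βΔ in ℝ
  have h5 : (∑ v ∈ S', ((G.neighborFinset v \ nbhd G S).card : ℝ)) <
      S'.card * ((Δ : ℝ) - 2 * β * Δ) := by
    have key : ∀ v ∈ S', ((G.neighborFinset v \ nbhd G S).card : ℝ) <
        (Δ : ℝ) - 2 * β * Δ := by
      intro v hv
      have hd : (G.neighborFinset v \ nbhd G S).card +
          (G.neighborFinset v ∩ nbhd G S).card = (G.neighborFinset v).card :=
        Finset.card_sdiff_add_card_inter _ _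
      have hdeg : (G.neighborFinset v).card ≤ Δ := by
        rw [G.card_neighborFinset_eq_degree]; exact hΔ v
      have hvc := hcon v hv
      have : ((G.neighborFinset v \ nbhd G S).card : ℝ) +
          ((G.neighborFinset v ∩ nbhd G S).card : ℝ) ≤ (Δ : ℝ) := by
        exact_mod_cast hd ▸ (Nat.cast_le.2 hdeg)
      linarith
    calc (∑ v ∈ S', ((G.neighborFinset v \ nbhd G S).card : ℝ))
        < ∑ _v ∈ S', ((Δ : ℝ) - 2 * β * Δ) := Finset.sum_lt_sum_of_nonempty hne key
      _ = S'.card * ((Δ : ℝ) - 2 * β * Δ) := by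
        rw [Finset.sum_const, nsmul_eq_mul]
  have h2' : ((nbhd G T).card : ℝ) ≤ ((nbhd G S).card : ℝ) +
      ((nbhd G S' \ nbhd G S).card : ℝ) := by exact_mod_cast h2
  have h3' : ((nbhd G S).card : ℝ) ≤ (Δ : ℝ) * S.card := by exact_mod_cast h3
  have h4' : ((nbhd G S' \ nbhd G S).card : ℝ) ≤
      ∑ v ∈ S', ((G.neighborFinset v \ nbhd G S).card : ℝ) := by
    push_cast; exact_mod_cast h4
  have hTc' : ((T.card : ℝ)) = 2 * S.card := by exact_mod_cast hTcard
  have hSc' : ((S'.card : ℝ)) = S.card := by exact_mod_cast hcard.symm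
  rw [hTc'] at h1
  rw [hSc'] at h5
  nlinarith [h1, h2', h3', h4', h5]
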